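/- Let X be a standard Fréchet random variable, η ∈ ℝ, τ > 0, ξ ≠ 0, and β a positive integer with βξ < 1/2. Set Z = (η − τ/ξ) + (τ/ξ) X^ξ. Then Var(Z^β) = Σ_{k1=0}^{β} Σ_{k2=0}^{β} B_{k1,k2,β,η,τ,ξ} [ Γ(1 − ξ(2β − k1 − k2)) − Γ(1 − (β−k1)ξ) Γ(1 − (β−k2)ξ) ], where B_{k1,k2,β,η,τ,ξ} = binom(β,k1) binom(β,k2) (η − τ/ξ)^{k1+k2} (τ/ξ)^{2β−(k1+k2)}. -/

import Mathlib

open MeasureTheory Real Set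

def IsStdFrechet {Ω : Type*} [MeasurableSpace Ω] (P : Measure Ω) (X : Ω → ℝ) : Prop :=
  ∀ x : ℝ, P {ω | X ω ≤ x} = if 0 < x then ENNReal.ofReal (Real.exp (-1 / x)) else 0

noncomputable def gam : Measure ℝ :=
  (volume.restrict (Set.Ioi (0:ℝ))).withDensity fun t => ENNReal.ofReal (Real.exp (-t))

lemma exp_neg_int : IntegrableOn (fun t : ℝ => Real.exp (-t)) (Ioi 0) :=
  (exp_neg_integrableOn_Ioi 0 one_pos).congr
    (Filter.Eventually.of_forall fun t => by simp)

lemma gam_apply {s : Set ℝ} (hs : MeasurableSet s) :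
    gam s = ∫⁻ t in s ∩ Ioi 0, ENNReal.ofReal (Real.exp (-t)) := by
  rw [gam, withDensity_apply _ hs, Measure.restrict_restrict hs]

instance : IsProbabilityMeasure gam := by
  constructor
  rw [gam_apply MeasurableSet.univ, Set.univ_inter,
    ← ofReal_integral_eq_lintegral_ofReal exp_neg_int
      (Filter.Eventually.of_forall fun t => (exp_pos _).le)]
  rw [integral_exp_neg_Ioi_zero]; simp

lemma frechet_map {Ω : Type*} [MeasurableSpace Ω] (P : Measure Ω) [IsProbabilityMeasure P]
    (X : Ω → ℝ) (hX : Measurable X) (hF : IsStdFrechet P X) :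
    P.map X = gam.map (fun t : ℝ => t⁻¹) := by
  have hmapP : IsProbabilityMeasure (P.map X) := Measure.isProbabilityMeasure_map hX.aemeasurable
  refine MeasureTheory.Measure.ext_of_Iic _ _ fun x => ?_
  rw [Measure.map_apply hX measurableSet_Iic, Measure.map_apply measurable_inv measurableSet_Iic]
  have : X ⁻¹' Iic x = {ω | X ω ≤ x} := rfl
  rw [this, hF x]
  have hpre : (fun t : ℝ => t⁻¹) ⁻¹' Iic x = {t : ℝ | t⁻¹ ≤ x} := rfl
  rw [hpre, gam_apply (show MeasurableSet {t : ℝ | t⁻¹ ≤ x} from measurable_inv measurableSet_Iic)]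
  rcases lt_or_ge 0 x with hx | hx
  · rw [if_pos hx]
    have hset : {t : ℝ | t⁻¹ ≤ x} ∩ Ioi 0 = Ici x⁻¹ := by
      ext t
      simp only [mem_inter_iff, mem_setOf_eq, mem_Ioi, mem_Ici]
      constructor
      · rintro ⟨h1, h2⟩
        rwa [inv_le_comm₀ hx h2]
      · intro h
        have ht : 0 < t := lt_of_lt_of_le (inv_pos.mpr hx) h
        exact ⟨(inv_le_comm₀ ht hx).mpr h, ht⟩
    rw [hset, ← MeasureTheory.restrict_Ioi_eq_restrict_Ici]
    · rw [← ofReal_integral_eq_lintegral_ofReal (exp_neg_int.mono_set (Ioi_subset_Ioi (inv_pos.mpr hx).le))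
        (Filter.Eventually.of_forall fun t => (exp_pos _).le), integral_exp_neg_Ioi]
      rw [neg_div, one_div]
  · rw [if_neg (not_lt.mpr hx)]
    have hset : {t : ℝ | t⁻¹ ≤ x} ∩ Ioi 0 = ∅ := by
      ext t
      simp only [mem_inter_iff, mem_setOf_eq, mem_Ioi, mem_empty_iff_false, iff_false, not_and]
      intro h1 h2
      exact absurd (le_trans h1 hx) (not_le.mpr (inv_pos.mpr h2))
    rw [hset]
    simp

lemma hgam_eq : gam = (volume.restrict (Set.Ioi (0:ℝ))).withDensity
    (fun t => ((Real.toNNReal (Real.exp (-t))) : ENNReal)) := rfl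

lemma hmeas_f : Measurable fun t : ℝ => (Real.exp (-t)).toNNReal :=
  (Real.measurable_exp.comp measurable_neg).real_toNNReal

lemma frechet_moment {Ω : Type*} [MeasurableSpace Ω] (P : Measure Ω) [IsProbabilityMeasure P]
    (X : Ω → ℝ) (hX : Measurable X) (hF : IsStdFrechet P X) (s : ℝ) (hs : s < 1) :
    Integrable (fun ω => X ω ^ s) P ∧ ∫ ω, X ω ^ s ∂P = Real.Gamma (1 - s) := by
  have hG : IntegrableOn (fun t : ℝ => exp (-t) * t ^ ((1-s)-1)) (Ioi 0) :=
    Real.GammaIntegral_convergent (by linarith)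
  have hcongr : ∀ t ∈ Ioi (0:ℝ),
      Real.exp (-t) * t ^ ((1-s)-1) = (Real.exp (-t)).toNNReal • (t⁻¹) ^ s := by
    intro t ht
    rw [NNReal.smul_def, Real.coe_toNNReal _ (exp_pos _).le,
      Real.inv_rpow (le_of_lt ht), ← Real.rpow_neg (le_of_lt ht)]
    norm_num
  have hmg : Measurable fun x : ℝ => x ^ s := by fun_prop
  have hint_g : Integrable (fun t : ℝ => (t⁻¹) ^ s) gam := by
    rw [hgam_eq, integrable_withDensity_iff_integrable_smul hmeas_f]
    refine hG.congr ?_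
    rw [Filter.EventuallyEq, ae_restrict_iff' measurableSet_Ioi]
    exact Filter.Eventually.of_forall hcongr
  constructor
  · have h0 : Integrable (fun x : ℝ => x ^ s) (P.map X) := by
      rw [frechet_map P X hX hF]
      refine (integrable_map_measure hmg.aestronglyMeasurable measurable_inv.aemeasurable).mpr ?_
      exact hint_g
    exact (integrable_map_measure hmg.aestronglyMeasurable hX.aemeasurable).mp
      (by rwa [])
  · rw [← integral_map hX.aemeasurable hmg.aestronglyMeasurable, frechet_map P X hX hF,
      integral_map measurable_inv.aemeasurable hmg.aestronglyMeasurable]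
    rw [hgam_eq, integral_withDensity_eq_integral_smul hmeas_f,
      Real.Gamma_eq_integral (by linarith : (0:ℝ) < 1 - s)]
    exact setIntegral_congr_fun measurableSet_Ioi fun t ht => (hcongr t ht).symm

lemma frechet_pos {Ω : Type*} [MeasurableSpace Ω] (P : Measure Ω)
    (X : Ω → ℝ) (hF : IsStdFrechet P X) : ∀ᵐ ω ∂P, 0 < X ω := by
  have h := hF 0
  rw [if_neg (lt_irrefl 0)] at h
  rw [ae_iff]
  convert h using 2
  ext ω
  simp [not_lt]

/-- Variance of `Z^β` where `Z = (η - τ/ξ) + (τ/ξ) X^ξ` for `X` standard Fréchet,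
`τ > 0`, `ξ ≠ 0` and `β` a positive integer with `βξ < 1/2`. -/
theorem stmt4 {Ω : Type*} [MeasurableSpace Ω] (P : Measure Ω) [IsProbabilityMeasure P]
    (X : Ω → ℝ) (hX : Measurable X) (hF : IsStdFrechet P X)
    (η τ ξ : ℝ) (hτ : 0 < τ) (hξ : ξ ≠ 0)
    (β : ℕ) (hβ : 0 < β) (hβξ : (β : ℝ) * ξ < 1 / 2) :
    ProbabilityTheory.variance (fun ω => ((η - τ / ξ) + (τ / ξ) * X ω ^ ξ) ^ β) P =
      ∑ k1 ∈ Finset.range (β + 1), ∑ k2 ∈ Finset.range (β + 1),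
        ((β.choose k1 : ℝ) * (β.choose k2 : ℝ) * (η - τ / ξ) ^ (k1 + k2)
            * (τ / ξ) ^ (2 * β - (k1 + k2)))
          * (Real.Gamma (1 - ξ * (2 * (β : ℝ) - k1 - k2))
              - Real.Gamma (1 - ((β : ℝ) - k1) * ξ) * Real.Gamma (1 - ((β : ℝ) - k2) * ξ)) := by
  classical
  set a : ℝ := η - τ / ξ with ha
  set b : ℝ := τ / ξ with hb
  have hlt : ∀ m : ℕ, m ≤ 2*β → ξ * (m:ℝ) < 1 := by
    intro m hm
    rcases le_or_gt ξ 0 with h | h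
    · have h0 : ξ * (m:ℝ) ≤ 0 := mul_nonpos_of_nonpos_of_nonneg h (Nat.cast_nonneg m)
      linarith
    · have hm' : (m:ℝ) ≤ 2*β := by exact_mod_cast hm
      nlinarith
  have hmom : ∀ m : ℕ, m ≤ 2*β →
      Integrable (fun ω => X ω ^ (ξ * (m:ℝ))) P ∧
        ∫ ω, X ω ^ (ξ * (m:ℝ)) ∂P = Real.Gamma (1 - ξ * (m:ℝ)) :=
    fun m hm => frechet_moment P X hX hF _ (hlt m hm)
  set C : ℕ → ℝ := fun k => (β.choose k : ℝ) * a^k * b^(β-k) with hCdef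
  have hrep : ∀ x : ℝ, 0 < x →
      (a + b * x ^ ξ) ^ β = ∑ k ∈ Finset.range (β+1), C k * x ^ (ξ * ((β - k : ℕ) : ℝ)) := by
    intro x hx
    rw [add_pow]
    refine Finset.sum_congr rfl fun k hk => ?_
    rw [hCdef, mul_pow, ← Real.rpow_natCast (x^ξ) (β-k), ← Real.rpow_mul hx.le]
    ring
  have hpos := frechet_pos P X hF
  set Z : Ω → ℝ := fun ω => (a + b * X ω ^ ξ) ^ β with hZ
  have hZm : Measurable Z := by fun_prop
  have hrepa : Z =ᵐ[P] (fun ω => ∑ k ∈ Finset.range (β+1), C k * X ω ^ (ξ * ((β - k : ℕ) : ℝ))) :=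
    hpos.mono fun ω hω => hrep _ hω
  have hrep2 : (fun ω => Z ω ^ 2) =ᵐ[P] (fun ω => ∑ k1 ∈ Finset.range (β+1), ∑ k2 ∈ Finset.range (β+1),
      (C k1 * C k2) * X ω ^ (ξ * ((((β - k1) + (β - k2)) : ℕ) : ℝ))) := by
    filter_upwards [hpos, hrepa] with ω hω hr
    rw [sq, hr, Finset.sum_mul_sum]
    refine Finset.sum_congr rfl fun k1 _ => Finset.sum_congr rfl fun k2 _ => ?_
    rw [Nat.cast_add, mul_add, Real.rpow_add hω]
    ring
  have hint1 : ∀ k : ℕ, Integrable (fun ω => C k * X ω ^ (ξ * (((β - k) : ℕ) : ℝ))) P :=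
    fun k => ((hmom _ (by omega)).1).const_mul _
  have hint2 : ∀ k1 k2 : ℕ, Integrable
      (fun ω => (C k1 * C k2) * X ω ^ (ξ * ((((β - k1) + (β - k2)) : ℕ) : ℝ))) P :=
    fun k1 k2 => ((hmom _ (by omega)).1).const_mul _
  have hIZ : Integrable Z P :=
    ((integrable_finset_sum _ fun k _ => hint1 k).congr hrepa.symm)
  have hIZ2 : Integrable (fun ω => Z ω ^ 2) P :=
    (integrable_finset_sum _ fun k1 _ => integrable_finset_sum _ fun k2 _ =>
      hint2 k1 k2).congr hrep2.symm
  have hvar := ProbabilityTheory.variance_eq_sub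
    ((memLp_two_iff_integrable_sq hZm.aestronglyMeasurable).mpr hIZ2)
  have hEZ : ∫ ω, Z ω ∂P
      = ∑ k ∈ Finset.range (β+1), C k * Real.Gamma (1 - ξ * (((β-k):ℕ):ℝ)) := by
    rw [integral_congr_ae hrepa, integral_finset_sum _ fun k _ => hint1 k]
    refine Finset.sum_congr rfl fun k _ => ?_
    rw [integral_const_mul, (hmom (β-k) (by omega)).2]
  have hEZ2 : ∫ ω, Z ω ^ 2 ∂P = ∑ k1 ∈ Finset.range (β+1), ∑ k2 ∈ Finset.range (β+1),
      (C k1 * C k2) * Real.Gamma (1 - ξ * ((((β-k1)+(β-k2)):ℕ):ℝ)) := by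
    rw [integral_congr_ae hrep2, integral_finset_sum _ fun k1 _ =>
      integrable_finset_sum _ fun k2 _ => hint2 k1 k2]
    refine Finset.sum_congr rfl fun k1 hk1 => ?_
    rw [integral_finset_sum _ fun k2 _ => hint2 k1 k2]
    refine Finset.sum_congr rfl fun k2 _ => ?_
    rw [integral_const_mul, (hmom _ (by omega)).2]
  have hvar' : ProbabilityTheory.variance Z P = (∫ ω, Z ω ^ 2 ∂P) - (∫ ω, Z ω ∂P)^2 := by
    simpa [Pi.pow_apply] using hvar
  rw [hvar', hEZ2, hEZ, sq, Finset.sum_mul_sum, ← Finset.sum_sub_distrib]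
  refine Finset.sum_congr rfl fun k1 hk1 => ?_
  rw [← Finset.sum_sub_distrib]
  refine Finset.sum_congr rfl fun k2 hk2 => ?_
  have h1 : k1 ≤ β := by simp at hk1; omega
  have h2 : k2 ≤ β := by simp at hk2; omega
  have e12 : (1 : ℝ) - ξ * ((((β-k1)+(β-k2)):ℕ):ℝ) = 1 - ξ * (2*(β:ℝ) - k1 - k2) := by
    push_cast [Nat.cast_sub h1, Nat.cast_sub h2]; ring
  have e1 : (1 : ℝ) - ξ * (((β-k1):ℕ):ℝ) = 1 - ((β:ℝ) - k1) * ξ := by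
    push_cast [Nat.cast_sub h1]; ring
  have e2 : (1 : ℝ) - ξ * (((β-k2):ℕ):ℝ) = 1 - ((β:ℝ) - k2) * ξ := by
    push_cast [Nat.cast_sub h2]; ring
  have hCC : C k1 * C k2
      = (β.choose k1 : ℝ) * (β.choose k2 : ℝ) * a ^ (k1+k2) * b ^ (2*β - (k1+k2)) := by
    rw [hCdef]; dsimp only
    rw [show 2*β - (k1+k2) = (β-k1)+(β-k2) from by omega, pow_add a, pow_add b]
    ring
  have key : ∀ G12 G1 G2 : ℝ, (C k1 * C k2) * G12 - (C k1 * G1) * (C k2 * G2)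
      = ((β.choose k1:ℝ) * (β.choose k2) * a^(k1+k2) * b^(2*β-(k1+k2))) * (G12 - G1*G2) := by
    intro G12 G1 G2
    rw [← hCC]
    ring
  rw [e12, e1, e2]
  exact key _ _ _
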